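/- Let T be a trimmed tree with trunk v, and let w be any vertex of T other than v. Then every bough of w not containing v is light and contains no marked vertices at all. -/
import Mathlib


/-- The graph obtained from `G` by deleting the vertex `v` (and its incident edges);
its connected components are the boughs of `v`. -/
def deleteVert {V : Type*} (G : SimpleGraph V) (v : V) : SimpleGraph {x : V // x ≠ v} :=
  SimpleGraph.induce { x : V | x ≠ v } G

/-- A bough `C` of the vertex `v` (in a graph with a marking of the vertices) is light
when it contains at most one marked vertex, and that marked vertex (if present) is
adjacent to `v`. -/
def LightBough {V : Type*} (G : SimpleGraph V) (marked : V → Prop) (v : V)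
    (C : (deleteVert G v).ConnectedComponent) : Prop :=
  (∀ x y : {x : V // x ≠ v},
      (deleteVert G v).connectedComponentMk x = C →
      (deleteVert G v).connectedComponentMk y = C →
      marked x.1 → marked y.1 → x = y) ∧
  (∀ x : {x : V // x ≠ v},
      (deleteVert G v).connectedComponentMk x = C →
      marked x.1 → G.Adj v x.1)

/-- `T` is a trimmed tree with trunk `v`: every bough of `v` is light. -/
def IsTrimmed {V : Type*} (G : SimpleGraph V) (marked : V → Prop) (v : V) : Prop :=
  ∀ C : (deleteVert G v).ConnectedComponent, LightBough G marked v C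

/-- In a trimmed tree with trunk `v`, every bough of a vertex `w ≠ v` that does not
contain `v` is light, and in fact contains no marked vertices at all. -/
theorem bough_avoiding_trunk_unmarked {V : Type*} (G : SimpleGraph V)
    (marked : V → Prop) (v : V) (hT : G.IsTree) (htrim : IsTrimmed G marked v)
    (w : V) (hwv : w ≠ v)
    (C : (deleteVert G w).ConnectedComponent)
    (hnotv : (deleteVert G w).connectedComponentMk ⟨v, Ne.symm hwv⟩ ≠ C) :
    LightBough G marked w C ∧
      ∀ x : {x : V // x ≠ w},
        (deleteVert G w).connectedComponentMk x = C → ¬ marked x.1 := by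
  have key : ∀ x : {x : V // x ≠ w},
      (deleteVert G w).connectedComponentMk x = C → ¬ marked x.1 := by
    rintro ⟨x, hxw⟩ hx hm
    have hxv : x ≠ v := by
      rintro rfl
      exact hnotv hx
    have hadj : G.Adj v x :=
      (htrim ((deleteVert G v).connectedComponentMk ⟨x, hxv⟩)).2 ⟨x, hxv⟩ rfl hm
    have hadj' : (deleteVert G w).Adj ⟨v, Ne.symm hwv⟩ ⟨x, hxw⟩ := hadj
    exact hnotv (hx ▸ SimpleGraph.ConnectedComponent.sound hadj'.reachable)
  exact ⟨⟨fun x y hx _ hmx _ => absurd hmx (key x hx),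
          fun x hx hmx => absurd hmx (key x hx)⟩, key⟩
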